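/- In the iterative sequence (p^k, z^k) defined above, for each bank i the subsidy sequence (z^k_i)_k is monotone nondecreasing and bounded above by max{0, L_i − α_i e_i}; hence it converges. -/

import Mathlib

open Finset Filter

/-- In the iterative payment–subsidy construction, for each bank `i` the subsidy sequence
`(z^k_i)_k` is monotone nondecreasing and bounded above by `max 0 (L_i − α_i e_i)`;
hence it converges. -/
theorem subsidies_monotone_bounded_convergent {N : Type*} [Fintype N]
    (L : N → N → ℝ) (e α β : N → ℝ)
    (hL : ∀ i j, 0 ≤ L i j) (hLdiag : ∀ i, L i i = 0)
    (hLi : ∀ i, 0 < ∑ j, L i j)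
    (hα : ∀ i, α i ∈ Set.Icc (0:ℝ) 1) (hβ : ∀ i, β i ∈ Set.Icc (0:ℝ) 1)
    (p : ℕ → N → N → ℝ) (z : ℕ → N → ℝ)
    (hp0 : ∀ i j, p 0 i j = L i j) (hz0 : ∀ i, z 0 i = 0)
    (hstep : ∀ k i,
      (0 ≤ α i * e i + z k i + ∑ j, (β i * p k j i - p k i j) →
        (∀ j, p (k+1) i j = p k i j) ∧ z (k+1) i = z k i) ∧
      (α i * e i + z k i + ∑ j, (β i * p k j i - p k i j) < 0 →
        (∀ j, p (k+1) i j =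
          max 0 (p k i j +
            (α i * e i + z k i + ∑ j', (β i * p k j' i - p k i j')) * L i j
              / ∑ j', L i j')) ∧
        z (k+1) i = max 0 ((∑ j, p (k+1) i j) - α i * e i - ∑ j, β i * p k j i))) :
    ∀ i, Monotone (fun k => z k i) ∧
      (∀ k, z k i ≤ max 0 ((∑ j, L i j) - α i * e i)) ∧
      ∃ l, Tendsto (fun k => z k i) atTop (nhds l) := by
  -- payments stay in [0, L i j]
  have hpb : ∀ k i j, 0 ≤ p k i j ∧ p k i j ≤ L i j := by
    intro k
    induction k with
    | zero => intro i j; rw [hp0]; exact ⟨hL i j, le_rfl⟩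
    | succ k ih =>
      intro i j
      rcases le_or_gt 0 (α i * e i + z k i + ∑ j, (β i * p k j i - p k i j)) with h | h
      · rw [((hstep k i).1 h).1 j]; exact ih i j
      · have hpj := ((hstep k i).2 h).1 j
        rw [hpj]
        constructor
        · exact le_max_left _ _
        · have hmul : (α i * e i + z k i + ∑ j', (β i * p k j' i - p k i j')) * L i j
              / ∑ j', L i j' ≤ 0 := by
            apply div_nonpos_of_nonpos_of_nonneg
            · exact mul_nonpos_of_nonpos_of_nonneg h.le (hL i j)
            · exact (hLi i).le
          refine max_le ?_ ?_
          · exact hL i j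
          · linarith [(ih i j).2]
  -- z is nondecreasing stepwise
  have hmono : ∀ i, Monotone (fun k => z k i) := by
    intro i
    apply monotone_nat_of_le_succ
    intro k
    rcases le_or_gt 0 (α i * e i + z k i + ∑ j, (β i * p k j i - p k i j)) with h | h
    · simp [((hstep k i).1 h).2]
    · have hz' := ((hstep k i).2 h).2
      have hsum : ∑ j, p k i j +
          (α i * e i + z k i + ∑ j, (β i * p k j i - p k i j)) ≤ ∑ j, p (k+1) i j := by
        have : ∀ j, p k i j +
            (α i * e i + z k i + ∑ j', (β i * p k j' i - p k i j')) * L i j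
              / ∑ j', L i j' ≤ p (k+1) i j := by
          intro j
          rw [((hstep k i).2 h).1 j]
          exact le_max_right _ _
        calc ∑ j, p k i j + (α i * e i + z k i + ∑ j, (β i * p k j i - p k i j))
            = ∑ j, (p k i j +
              (α i * e i + z k i + ∑ j', (β i * p k j' i - p k i j')) * L i j
                / ∑ j', L i j') := by
              rw [Finset.sum_add_distrib]
              congr 1
              rw [show ∀ E : ℝ, (∑ j, E * L i j / ∑ j', L i j')
                  = (E / ∑ j', L i j') * ∑ j, L i j from fun E => by
                rw [Finset.mul_sum]; congr 1; ext j; ring]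
              rw [div_mul_cancel₀ _ (hLi i).ne']
          _ ≤ ∑ j, p (k+1) i j := Finset.sum_le_sum (fun j _ => this j)
      have hkey : z k i ≤ (∑ j, p (k+1) i j) - α i * e i - ∑ j, β i * p k j i := by
        have hsub : ∑ j, (β i * p k j i - p k i j)
            = (∑ j, β i * p k j i) - ∑ j, p k i j := Finset.sum_sub_distrib _ _
        rw [hsub] at hsum
        linarith
      simp only [hz']
      exact le_trans hkey (le_max_right _ _)
  -- bound
  have hbdd : ∀ i k, z k i ≤ max 0 ((∑ j, L i j) - α i * e i) := by
    intro i k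
    induction k with
    | zero => rw [hz0]; exact le_max_left _ _
    | succ k ih =>
      rcases le_or_gt 0 (α i * e i + z k i + ∑ j, (β i * p k j i - p k i j)) with h | h
      · rw [((hstep k i).1 h).2]; exact ih
      · rw [((hstep k i).2 h).2]
        refine max_le (le_max_left _ _) ?_
        have h1 : ∑ j, p (k+1) i j ≤ ∑ j, L i j :=
          Finset.sum_le_sum (fun j _ => (hpb (k+1) i j).2)
        have h2 : (0:ℝ) ≤ ∑ j, β i * p k j i :=
          Finset.sum_nonneg (fun j _ => mul_nonneg (hβ i).1 (hpb k j i).1)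
        have : (∑ j, p (k+1) i j) - α i * e i - ∑ j, β i * p k j i
            ≤ (∑ j, L i j) - α i * e i := by linarith
        exact le_trans this (le_max_right _ _)
  intro i
  refine ⟨hmono i, hbdd i, ⟨⨆ k, z k i, ?_⟩⟩
  exact tendsto_atTop_ciSup (hmono i)
    ⟨max 0 ((∑ j, L i j) - α i * e i), by rintro x ⟨k, rfl⟩; exact hbdd i k⟩
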